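/- Let n ≥ 2 be an integer, ε > 0, and m, m' ∈ ℤⁿ. Then ∫_{[0,2π]^n} ∫_{S^{n-1}_ε} (−⟨m', y⟩) e^{i⟨m−m', x⟩} e^{−⟨m+m', y⟩} dσ_ε(y) dx = (2π)^n ε^{n} |m| γ_n'(2ε|m|) vol(S^{n-2}) if m = m', and equals 0 if m ≠ m'. -/

import Mathlib

open MeasureTheory

/-- The `(n-1)`-dimensional surface measure on the sphere of radius `r` centered at the
origin of `ℝⁿ`: the pushforward of the canonical surface measure `volume.toSphere` on the
unit sphere under the scaling `y ↦ r • y`, scaled by the factor `r^(n-1)`. -/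
noncomputable def sphereMeasure (n : ℕ) (r : ℝ) :
    Measure (EuclideanSpace ℝ (Fin n)) :=
  ENNReal.ofReal (r ^ (n - 1)) •
    Measure.map
      (fun y : Metric.sphere (0 : EuclideanSpace ℝ (Fin n)) 1 =>
        r • (y : EuclideanSpace ℝ (Fin n)))
      (volume : Measure (EuclideanSpace ℝ (Fin n))).toSphere

/-- `vol(S^d)`: the total surface measure of the unit sphere `S^d ⊆ ℝ^(d+1)`
(so `vol(S⁰) = 2`). -/
noncomputable def sphereVol (d : ℕ) : ℝ :=
  (sphereMeasure (d + 1) 1 Set.univ).toReal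

/-- For an integer `n ≥ 2`, `γ_n (t) = ∫₀^π e^{t cos α} (sin α)^(n-2) dα`. -/
noncomputable def gammaN (n : ℕ) (t : ℝ) : ℝ :=
  ∫ α in (0:ℝ)..Real.pi, Real.exp (t * Real.cos α) * Real.sin α ^ (n - 2)

/-- The derivative `γ_n' (t) = ∫₀^π cos α · e^{t cos α} (sin α)^(n-2) dα`. -/
noncomputable def gammaN' (n : ℕ) (t : ℝ) : ℝ :=
  ∫ α in (0:ℝ)..Real.pi, Real.cos α * Real.exp (t * Real.cos α) * Real.sin α ^ (n - 2)

/-- A vector `m ∈ ℤⁿ` regarded as a vector in Euclidean space `ℝⁿ`. -/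
def intVec {n : ℕ} (m : Fin n → ℤ) : EuclideanSpace ℝ (Fin n) := WithLp.toLp 2 (fun i => (m i : ℝ))

open Metric Set
open scoped Pointwise

noncomputable section

local notation "ES" N => EuclideanSpace ℝ (Fin N)

-- rotation of the sphere
def sphRot {N : ℕ} (R : (ES N) ≃ₗᵢ[ℝ] (ES N)) (ω : sphere (0 : ES N) 1) :
    sphere (0 : ES N) 1 :=
  ⟨R ω.1, by
    have := ω.2
    rw [mem_sphere_zero_iff_norm] at this ⊢
    rw [R.norm_map, this]⟩

lemma sphRot_coe {N : ℕ} (R : (ES N) ≃ₗᵢ[ℝ] (ES N)) (ω : sphere (0 : ES N) 1) :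
    ((sphRot R ω : sphere (0 : ES N) 1) : ES N) = R ω.1 := rfl

lemma continuous_sphRot {N : ℕ} (R : (ES N) ≃ₗᵢ[ℝ] (ES N)) : Continuous (sphRot R) :=
  (R.continuous.comp continuous_subtype_val).subtype_mk _

lemma map_sphRot {N : ℕ} (R : (ES N) ≃ₗᵢ[ℝ] (ES N)) :
    Measure.map (sphRot R) (volume : Measure (ES N)).toSphere
      = (volume : Measure (ES N)).toSphere := by
  ext s hs
  rw [Measure.map_apply (continuous_sphRot R).measurable hs,
    Measure.toSphere_apply' _ hs, Measure.toSphere_apply' _ ((continuous_sphRot R).measurable hs)]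
  congr 1
  have h1 : (Subtype.val '' (sphRot R ⁻¹' s) : Set (ES N)) = R.symm '' (Subtype.val '' s) := by
    ext x
    constructor
    · rintro ⟨ω, hω, rfl⟩
      exact ⟨(sphRot R ω).1, ⟨sphRot R ω, hω, rfl⟩, by simp [sphRot_coe]⟩
    · rintro ⟨y, ⟨ω, hω, rfl⟩, rfl⟩
      refine ⟨sphRot R.symm ω, ?_, rfl⟩
      have : sphRot R (sphRot R.symm ω) = ω := by
        ext
        simp [sphRot_coe]
      rw [Set.mem_preimage, this]
      exact hω
  rw [h1]
  have h2 : Ioo (0:ℝ) 1 • (R.symm '' (Subtype.val '' s))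
      = R.symm '' (Ioo (0:ℝ) 1 • (Subtype.val '' s)) := by
    ext x
    simp only [Set.mem_smul, Set.mem_image]
    constructor
    · rintro ⟨c, hc, y, ⟨z, hz, rfl⟩, rfl⟩
      exact ⟨c • z, ⟨c, hc, z, hz, rfl⟩, by simp⟩
    · rintro ⟨y, ⟨c, hc, z, hz, rfl⟩, rfl⟩
      exact ⟨c, hc, R.symm z, ⟨z, hz, rfl⟩, by simp⟩
  rw [h2]
  have h3 : R.symm '' (Ioo (0:ℝ) 1 • (Subtype.val '' s)) = ⇑R ⁻¹' (Ioo (0:ℝ) 1 • (Subtype.val '' s)) := by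
    ext x
    constructor
    · rintro ⟨y, hy, rfl⟩; simpa using hy
    · intro hx; exact ⟨R x, hx, by simp⟩
  rw [h3]
  have Rm : (ES N) ≃ᵐ (ES N) := R.toHomeomorph.toMeasurableEquiv
  calc volume (⇑R ⁻¹' (Ioo (0:ℝ) 1 • (Subtype.val '' s)))
      = Measure.map (R.toHomeomorph.toMeasurableEquiv) volume (Ioo (0:ℝ) 1 • (Subtype.val '' s)) := by
        rw [MeasurableEquiv.map_apply]; rfl
    _ = volume (Ioo (0:ℝ) 1 • (Subtype.val '' s)) := by
        have : Measure.map (R.toHomeomorph.toMeasurableEquiv) (volume : Measure (ES N)) = volume :=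
          R.measurePreserving.map_eq
        rw [this]

lemma integral_sphRot {N : ℕ} (R : (ES N) ≃ₗᵢ[ℝ] (ES N)) (f : sphere (0 : ES N) 1 → ℝ)
    (hf : Continuous f) :
    ∫ ω, f (sphRot R ω) ∂(volume : Measure (ES N)).toSphere
      = ∫ ω, f ω ∂(volume : Measure (ES N)).toSphere := by
  conv_rhs => rw [← map_sphRot R]
  rw [integral_map (continuous_sphRot R).measurable.aemeasurable hf.aestronglyMeasurable]


def kk : ℝ → ℝ := Set.indicator (Set.Iio 1) (fun _ => 1)

lemma kk_meas : Measurable kk := measurable_const.indicator measurableSet_Iio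

lemma kk_of_lt {r : ℝ} (h : r < 1) : kk r = 1 := by simp [kk, Set.indicator_of_mem, h]
lemma kk_of_not_lt {r : ℝ} (h : ¬ r < 1) : kk r = 0 := by
  simp [kk, Set.indicator_of_notMem, h]
lemma kk_nonneg (r : ℝ) : 0 ≤ kk r := by
  by_cases h : r < 1
  · rw [kk_of_lt h]; norm_num
  · rw [kk_of_not_lt h]
lemma kk_le_one (r : ℝ) : kk r ≤ 1 := by
  by_cases h : r < 1
  · rw [kk_of_lt h]
  · rw [kk_of_not_lt h]; norm_num

lemma coord_cont {N : ℕ} (i : Fin N) : Continuous (fun x : ES N => x i) :=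
  (continuous_apply i).comp (PiLp.continuous_ofLp (p := 2) (β := fun _ : Fin N => ℝ))

lemma abs_coord_le_norm {N : ℕ} (x : ES N) (i : Fin N) : |x i| ≤ ‖x‖ := by
  have h : (x i : ℝ) = inner ℝ (EuclideanSpace.single i (1:ℝ)) x := by
    rw [EuclideanSpace.inner_single_left]; simp
  rw [h]
  calc |(inner ℝ (EuclideanSpace.single i (1:ℝ)) x : ℝ)|
      ≤ ‖EuclideanSpace.single i (1:ℝ)‖ * ‖x‖ := abs_real_inner_le_norm _ _
    _ = ‖x‖ := by rw [EuclideanSpace.norm_single]; simp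

lemma ratio_mem_Icc {N : ℕ} (x : ES N) (i : Fin N) : x i / ‖x‖ ∈ Set.Icc (-1:ℝ) 1 := by
  rcases eq_or_ne x 0 with rfl | hx
  · simp
  · have hn : (0:ℝ) < ‖x‖ := norm_pos_iff.2 hx
    have : |x i / ‖x‖| ≤ 1 := by
      rw [abs_div, abs_of_pos hn, div_le_one hn]
      exact abs_coord_le_norm x i
    exact abs_le.1 this


section maps
variable (k : ℕ)

def eqN : EuclideanSpace ℝ (Fin (k+2)) ≃ᵐ (Fin (k+2) → ℝ) := (MeasurableEquiv.toLp 2 _).symm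
def eqM : EuclideanSpace ℝ (Fin (k+1)) ≃ᵐ (Fin (k+1) → ℝ) := (MeasurableEquiv.toLp 2 _).symm
def pfsa : (Fin (k+2) → ℝ) ≃ᵐ ℝ × (Fin (k+1) → ℝ) :=
  MeasurableEquiv.piFinSuccAbove (fun _ : Fin (k+2) => ℝ) 0

def wv (s : ℝ) (x' : EuclideanSpace ℝ (Fin (k+1))) : EuclideanSpace ℝ (Fin (k+2)) :=
  (eqN k).symm ((pfsa k).symm (s, eqM k x'))

lemma pfsa_symm_apply (p : ℝ × (Fin (k+1) → ℝ)) :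
    (pfsa k).symm p = Fin.cons p.1 p.2 := by
  simp [pfsa, MeasurableEquiv.piFinSuccAbove, Fin.consEquiv]

lemma wv_zero (s : ℝ) (x' : EuclideanSpace ℝ (Fin (k+1))) : wv k s x' 0 = s := by
  show ((pfsa k).symm (s, eqM k x')) 0 = s
  rw [pfsa_symm_apply]
  rfl

lemma wv_norm (s : ℝ) (x' : EuclideanSpace ℝ (Fin (k+1))) :
    ‖wv k s x'‖ = Real.sqrt (s^2 + ‖x'‖^2) := by
  have hx' : ‖x'‖^2 = ∑ j, ‖x' j‖^2 := by
    rw [EuclideanSpace.norm_eq]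
    rw [Real.sq_sqrt]
    positivity
  rw [EuclideanSpace.norm_eq, hx']
  congr 1
  have hco : ∀ i, wv k s x' i = Fin.cons (α := fun _ : Fin (k+2) => ℝ) s (fun j => x' j) i := by
    intro i
    show ((pfsa k).symm (s, eqM k x')) i = _
    rw [pfsa_symm_apply]
    rfl
  rw [Fin.sum_univ_succ]
  simp only [hco, Fin.cons_zero, Fin.cons_succ]
  rw [Real.norm_eq_abs, sq_abs]

end maps


section FH1
variable {k : ℕ}

-- the target function F
def FF (k : ℕ) (g : ℝ → ℝ) : EuclideanSpace ℝ (Fin (k+2)) → ℝ :=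
  fun x => g (x 0 / ‖x‖) * kk ‖x‖

lemma FF_meas (k : ℕ) (g : ℝ → ℝ) (hg : Continuous g) : Measurable (FF k g) := by
  apply Measurable.mul
  · exact hg.measurable.comp ((coord_cont 0).measurable.div continuous_norm.measurable)
  · exact kk_meas.comp continuous_norm.measurable

lemma FF_integrable (k : ℕ) (g : ℝ → ℝ) (hg : Continuous g) {C : ℝ} (hC0 : 0 ≤ C)
    (hC : ∀ s ∈ Set.Icc (-1:ℝ) 1, |g s| ≤ C) :
    Integrable (FF k g) (volume : Measure (EuclideanSpace ℝ (Fin (k+2)))) := by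
  have hbound : Integrable ((ball (0 : EuclideanSpace ℝ (Fin (k+2))) 1).indicator fun _ => C)
      (volume : Measure (EuclideanSpace ℝ (Fin (k+2)))) :=
    (integrable_indicator_iff measurableSet_ball).2
      (integrableOn_const measure_ball_lt_top.ne)
  refine hbound.mono' (FF_meas k g hg).aestronglyMeasurable (Filter.Eventually.of_forall ?_)
  intro x
  by_cases hx : ‖x‖ < 1
  · have hmem : x ∈ ball (0 : EuclideanSpace ℝ (Fin (k+2))) 1 := by
      rwa [mem_ball_zero_iff]
    rw [Set.indicator_of_mem hmem]
    have h1 : |g (x 0 / ‖x‖)| ≤ C := hC _ (ratio_mem_Icc x 0)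
    calc ‖FF k g x‖ = |g (x 0 / ‖x‖)| * kk ‖x‖ := by
          rw [FF]; rw [Real.norm_eq_abs, abs_mul, abs_of_nonneg (kk_nonneg _)]
      _ ≤ C * 1 := mul_le_mul h1 (kk_le_one _) (kk_nonneg _) hC0
      _ = C := mul_one C
  · have : FF k g x = 0 := by rw [FF, kk_of_not_lt hx, mul_zero]
    rw [this]
    have hmem : x ∉ ball (0 : EuclideanSpace ℝ (Fin (k+2))) 1 := by
      rwa [mem_ball_zero_iff]
    rw [Set.indicator_of_notMem hmem]
    simp [hC0]

section hh
variable (k : ℕ) (g : ℝ → ℝ)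

def hh : ℝ × ℝ → ℝ := fun p =>
  (Set.Ioi (0:ℝ)).indicator
    (fun r => r^k * (g (p.1 / Real.sqrt (p.1^2 + r^2)) * kk (Real.sqrt (p.1^2 + r^2)))) p.2

lemma sqrt_meas : Measurable (fun p : ℝ × ℝ => Real.sqrt (p.1^2 + p.2^2)) :=
  Real.continuous_sqrt.measurable.comp ((measurable_fst.pow_const 2).add (measurable_snd.pow_const 2))

lemma hh_eq : hh k g = Set.indicator {p : ℝ × ℝ | 0 < p.2}
    (fun p => p.2^k * (g (p.1 / Real.sqrt (p.1^2 + p.2^2)) * kk (Real.sqrt (p.1^2 + p.2^2)))) := by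
  funext p
  by_cases h : 0 < p.2
  · rw [hh, Set.indicator_of_mem (show p.2 ∈ Set.Ioi 0 from h), Set.indicator_of_mem (show p ∈ {p : ℝ × ℝ | 0 < p.2} from h)]
  · rw [hh, Set.indicator_of_notMem (show p.2 ∉ Set.Ioi 0 from h), Set.indicator_of_notMem (show p ∉ {p : ℝ × ℝ | 0 < p.2} from h)]

lemma hh_meas (hg : Continuous g) : Measurable (hh k g) := by
  rw [hh_eq]
  refine Measurable.indicator ?_ (measurable_snd measurableSet_Ioi)
  exact (measurable_snd.pow_const k).mul
    ((hg.measurable.comp (measurable_fst.div (sqrt_meas))).mul (kk_meas.comp (sqrt_meas)))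

lemma hh_integrable (hg : Continuous g) {C : ℝ} (hC0 : 0 ≤ C)
    (hC : ∀ s ∈ Set.Icc (-1:ℝ) 1, |g s| ≤ C) :
    Integrable (hh k g) (volume : Measure (ℝ × ℝ)) := by
  set D : Set (ℝ × ℝ) := Set.Ioo (-1:ℝ) 1 ×ˢ Set.Ioo (-1:ℝ) 1 with hD
  have hDm : MeasurableSet D := measurableSet_Ioo.prod measurableSet_Ioo
  have hDfin : volume D < ⊤ := by
    rw [hD, Measure.volume_eq_prod, Measure.prod_prod, Real.volume_Ioo]
    exact ENNReal.mul_lt_top ENNReal.ofReal_lt_top ENNReal.ofReal_lt_top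
  have hbound : Integrable (D.indicator fun _ => C) (volume : Measure (ℝ × ℝ)) :=
    (integrable_indicator_iff hDm).2 (integrableOn_const hDfin.ne)
  refine hbound.mono' (hh_meas k g hg).aestronglyMeasurable (Filter.Eventually.of_forall ?_)
  rintro ⟨s, r⟩
  by_cases hr : 0 < r
  · by_cases hs : Real.sqrt (s^2 + r^2) < 1
    · have hmem : (s, r) ∈ D := by
        have h1 : s^2 + r^2 < 1 := by
          have := Real.sq_sqrt (by positivity : (0:ℝ) ≤ s^2 + r^2)
          nlinarith [Real.sqrt_nonneg (s^2 + r^2)]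
        constructor
        · have : s^2 < 1 := by nlinarith
          have habs : |s| < 1 := (sq_lt_one_iff_abs_lt_one _).1 this
          exact abs_lt.1 habs
        · have : r^2 < 1 := by nlinarith
          have habs : |r| < 1 := (sq_lt_one_iff_abs_lt_one _).1 this
          exact abs_lt.1 habs
      rw [Set.indicator_of_mem hmem]
      have h1 : r ≤ Real.sqrt (s^2 + r^2) := by
        rw [show r = Real.sqrt (r^2) by rw [Real.sqrt_sq hr.le]]
        exact Real.sqrt_le_sqrt (by nlinarith [Real.sq_sqrt (by positivity : (0:ℝ) ≤ r^2)])
      have hrk : r^k ≤ 1 := pow_le_one₀ hr.le (h1.trans hs.le)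
      have harg : |s / Real.sqrt (s^2 + r^2)| ≤ 1 := by
        have hpos : 0 < Real.sqrt (s^2 + r^2) := lt_of_lt_of_le hr h1
        rw [abs_div, abs_of_pos hpos, div_le_one hpos]
        rw [show |s| = Real.sqrt (s^2) by rw [Real.sqrt_sq_eq_abs]]
        exact Real.sqrt_le_sqrt (by nlinarith)
      have hnorm : ‖hh k g (s, r)‖ ≤ C := by
        rw [hh, Set.indicator_of_mem (show r ∈ Set.Ioi 0 from hr)]
        rw [Real.norm_eq_abs, abs_mul, abs_mul]
        calc |r^k| * (|g (s / Real.sqrt (s^2+r^2))| * |kk (Real.sqrt (s^2+r^2))|)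
            ≤ 1 * (C * 1) := by
              refine mul_le_mul ?_ (mul_le_mul (hC _ (abs_le.1 harg)) ?_ (abs_nonneg _) hC0)
                (by positivity) (by norm_num)
              · rw [abs_of_nonneg (by positivity)]; exact hrk
              · rw [abs_of_nonneg (kk_nonneg _)]; exact kk_le_one _
          _ = C := by ring
      exact hnorm
    · have h0 : hh k g (s, r) = 0 := by
        rw [hh, Set.indicator_of_mem (show r ∈ Set.Ioi 0 from hr), kk_of_not_lt hs]
        ring
      rw [h0, norm_zero]
      exact Set.indicator_apply_nonneg (fun _ => hC0)
  · have h0 : hh k g (s, r) = 0 := by rw [hh, Set.indicator_of_notMem (show r ∉ Set.Ioi 0 from hr)]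
    rw [h0, norm_zero]
    exact Set.indicator_apply_nonneg (fun _ => hC0)

end hh
section WayA
variable (k : ℕ) (g : ℝ → ℝ)

lemma smul_coord {N : ℕ} (c : ℝ) (x : EuclideanSpace ℝ (Fin N)) (i : Fin N) :
    (c • x) i = c * x i := rfl

lemma wayA (hg : Continuous g) :
    (∫ x, FF k g x ∂(volume : Measure (EuclideanSpace ℝ (Fin (k+2)))))
      = (∫ ω : sphere (0 : EuclideanSpace ℝ (Fin (k+2))) 1, g ((ω : EuclideanSpace ℝ (Fin (k+2))) 0)
          ∂(volume : Measure (EuclideanSpace ℝ (Fin (k+2)))).toSphere)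
        * (1/(k+2) : ℝ) := by
  have hdim : Module.finrank ℝ (EuclideanSpace ℝ (Fin (k+2))) - 1 = k+1 := by
    simp [finrank_euclideanSpace_fin]
  calc (∫ x, FF k g x ∂(volume : Measure (EuclideanSpace ℝ (Fin (k+2)))))
      = ∫ x : ({(0 : EuclideanSpace ℝ (Fin (k+2)))}ᶜ : Set _), FF k g x.1
          ∂((volume : Measure (EuclideanSpace ℝ (Fin (k+2)))).comap Subtype.val) := by
        rw [integral_subtype_comap (measurableSet_singleton _).compl, restrict_compl_singleton]
    _ = ∫ p : sphere (0 : EuclideanSpace ℝ (Fin (k+2))) 1 × Set.Ioi (0:ℝ),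
          g ((p.1 : EuclideanSpace ℝ (Fin (k+2))) 0) * kk (p.2 : ℝ)
          ∂(((volume : Measure (EuclideanSpace ℝ (Fin (k+2)))).toSphere).prod
            (Measure.volumeIoiPow (k+1))) := by
        have hmp := (volume : Measure (EuclideanSpace ℝ (Fin (k+2)))).measurePreserving_homeomorphUnitSphereProd
        rw [hdim] at hmp
        rw [← hmp.integral_comp (Homeomorph.measurableEmbedding _)
            (fun p => g ((p.1 : EuclideanSpace ℝ (Fin (k+2))) 0) * kk (p.2 : ℝ))]
        congr 1
        funext x
        have hx : (x : EuclideanSpace ℝ (Fin (k+2))) ≠ 0 := x.2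
        have hn : (0:ℝ) < ‖(x : EuclideanSpace ℝ (Fin (k+2)))‖ := norm_pos_iff.2 hx
        rw [homeomorphUnitSphereProd_apply_fst_coe, homeomorphUnitSphereProd_apply_snd_coe,
          smul_coord, FF, div_eq_inv_mul]
    _ = (∫ ω : sphere (0 : EuclideanSpace ℝ (Fin (k+2))) 1,
            g ((ω : EuclideanSpace ℝ (Fin (k+2))) 0)
            ∂(volume : Measure (EuclideanSpace ℝ (Fin (k+2)))).toSphere)
          * ∫ r : Set.Ioi (0:ℝ), kk (r : ℝ) ∂(Measure.volumeIoiPow (k+1)) := by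
        exact integral_prod_mul (L := ℝ)
          (μ := (volume : Measure (EuclideanSpace ℝ (Fin (k+2)))).toSphere)
          (ν := Measure.volumeIoiPow (k+1))
          (fun ω : sphere (0 : EuclideanSpace ℝ (Fin (k+2))) 1 => g ((ω : EuclideanSpace ℝ (Fin (k+2))) 0))
          (fun r : Set.Ioi (0:ℝ) => kk (r : ℝ))
    _ = _ := by
        congr 1
        have h1 : (fun r : Set.Ioi (0:ℝ) => kk (r : ℝ))
            = Set.indicator (Subtype.val ⁻¹' (Set.Iio (1:ℝ))) (fun _ => (1:ℝ)) := by
          funext r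
          by_cases h : (r : ℝ) < 1
          · rw [kk_of_lt h, Set.indicator_of_mem (show r ∈ _ from h)]
          · rw [kk_of_not_lt h, Set.indicator_of_notMem (show r ∉ _ from h)]
        rw [h1, integral_indicator (measurable_subtype_coe measurableSet_Iio), setIntegral_const]
        have h2 : (Subtype.val ⁻¹' (Set.Iio (1:ℝ)) : Set (Set.Ioi (0:ℝ)))
            = Set.Iio ⟨1, by norm_num⟩ := by
          ext r
          simp only [Set.mem_preimage, Set.mem_Iio, ← Subtype.coe_lt_coe]
        rw [h2, measureReal_def, Measure.volumeIoiPow_apply_Iio, smul_eq_mul, mul_one,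
          ENNReal.toReal_ofReal (by positivity)]
        push_cast
        ring
end WayA
section WayB
variable (k : ℕ) (g : ℝ → ℝ)

def fS (s r : ℝ) : ℝ := g (s / Real.sqrt (s^2 + r^2)) * kk (Real.sqrt (s^2 + r^2))

def Phi (k : ℕ) : ℝ × (Fin (k+1) → ℝ) → EuclideanSpace ℝ (Fin (k+2)) :=
  ⇑(eqN k).symm ∘ ⇑(pfsa k).symm

lemma Phi_mp : MeasurePreserving (Phi k) volume volume :=
  ((EuclideanSpace.volume_preserving_symm_measurableEquiv_toLp (Fin (k+2))).symm).comp
    ((volume_preserving_piFinSuccAbove (fun _ : Fin (k+2) => ℝ) 0).symm)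

lemma Phi_emb : MeasurableEmbedding (Phi k) :=
  ((eqN k).symm.measurableEmbedding).comp ((pfsa k).symm.measurableEmbedding)

lemma wayB (hg : Continuous g) {C : ℝ} (hC0 : 0 ≤ C)
    (hC : ∀ s ∈ Set.Icc (-1:ℝ) 1, |g s| ≤ C) :
    (∫ x, FF k g x ∂(volume : Measure (EuclideanSpace ℝ (Fin (k+2)))))
      = (((k+1 : ℕ) : ℝ) * (volume (ball (0 : EuclideanSpace ℝ (Fin (k+1))) 1)).toReal)
        * ((1/(k+2) : ℝ) * ∫ α in (0:ℝ)..Real.pi, g (Real.cos α) * Real.sin α ^ k) := by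
  have hInt : Integrable (FF k g ∘ Phi k) (volume : Measure (ℝ × (Fin (k+1) → ℝ))) :=
    ((Phi_mp k).integrable_comp_emb (Phi_emb k)).2 (FF_integrable k g hg hC0 hC)
  have hInt2 : Integrable (hh k g) (volume : Measure (ℝ × ℝ)) := hh_integrable k g hg hC0 hC
  set A : ℝ := ((k+1 : ℕ) : ℝ) * (volume (ball (0 : EuclideanSpace ℝ (Fin (k+1))) 1)).toReal
    with hA
  calc (∫ x, FF k g x ∂(volume : Measure (EuclideanSpace ℝ (Fin (k+2)))))
      = ∫ p : ℝ × (Fin (k+1) → ℝ), (FF k g ∘ Phi k) p := ((Phi_mp k).integral_comp (Phi_emb k) _).symm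
    _ = ∫ s : ℝ, ∫ v : Fin (k+1) → ℝ, (FF k g ∘ Phi k) (s, v) := by
        rw [Measure.volume_eq_prod]
        rw [Measure.volume_eq_prod] at hInt
        exact integral_prod _ hInt
    _ = ∫ s : ℝ, ∫ x' : EuclideanSpace ℝ (Fin (k+1)), FF k g (wv k s x') := by
        congr 1
        funext s
        rw [← (EuclideanSpace.volume_preserving_symm_measurableEquiv_toLp (Fin (k+1))).integral_comp
          (MeasurableEquiv.measurableEmbedding _) (fun v => (FF k g ∘ Phi k) (s, v))]
        rfl
    _ = ∫ s : ℝ, (((k+1 : ℕ) : ℝ) * ((volume (ball (0 : EuclideanSpace ℝ (Fin (k+1))) 1)).toReal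
          * ∫ r in Set.Ioi (0:ℝ), r ^ k • fS g s r)) := by
        congr 1
        funext s
        have h1 : ∀ x' : EuclideanSpace ℝ (Fin (k+1)), FF k g (wv k s x') = fS g s ‖x'‖ := by
          intro x'
          rw [FF, fS, wv_zero, wv_norm]
        simp_rw [h1]
        have h2 := integral_fun_norm_addHaar (volume : Measure (EuclideanSpace ℝ (Fin (k+1)))) (fS g s)
        rw [finrank_euclideanSpace_fin] at h2
        simp only [Nat.add_sub_cancel] at h2
        rw [h2, nsmul_eq_mul, smul_eq_mul, measureReal_def]
    _ = A * ∫ s : ℝ, ∫ r in Set.Ioi (0:ℝ), r ^ k • fS g s r := by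
        rw [integral_const_mul, integral_const_mul, hA, mul_assoc]
    _ = A * ∫ s : ℝ, ∫ r : ℝ, hh k g (s, r) := by
        congr 1
        refine integral_congr_ae (Filter.Eventually.of_forall fun s => ?_)
        simp only [hh, fS, smul_eq_mul]
        rw [integral_indicator measurableSet_Ioi]
    _ = A * ∫ p : ℝ × ℝ, hh k g p := by
        congr 1
        rw [Measure.volume_eq_prod] at hInt2 ⊢
        rw [integral_integral (f := fun s r => hh k g (s, r)) hInt2]
    _ = A * ∫ p in polarCoord.target, p.1 • hh k g (polarCoord.symm p) := by
        rw [integral_comp_polarCoord_symm (hh k g)]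
    _ = A * ∫ p in polarCoord.target,
          (p.1^(k+1) * kk p.1) * ((Set.Ioo (0:ℝ) Real.pi).indicator
            (fun θ => g (Real.cos θ) * Real.sin θ ^ k) p.2) := by
        congr 1
        refine setIntegral_congr_fun (measurableSet_Ioi.prod measurableSet_Ioo) ?_
        rintro ⟨ρ, θ⟩ ⟨hρ, hθ⟩
        simp only [Set.mem_Ioi] at hρ
        simp only [Set.mem_Ioo] at hθ
        have hsq : Real.sqrt ((ρ * Real.cos θ)^2 + (ρ * Real.sin θ)^2) = ρ := by
          have h3 : (ρ * Real.cos θ)^2 + (ρ * Real.sin θ)^2 = ρ^2 := by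
            have := Real.sin_sq_add_cos_sq θ
            nlinarith
          rw [h3, Real.sqrt_sq hρ.le]
        have hps : polarCoord.symm (ρ, θ) = (ρ * Real.cos θ, ρ * Real.sin θ) := rfl
        by_cases hθ2 : θ ∈ Set.Ioo (0:ℝ) Real.pi
        · have hsin : 0 < Real.sin θ := Real.sin_pos_of_pos_of_lt_pi hθ2.1 hθ2.2
          have hr : 0 < ρ * Real.sin θ := mul_pos hρ hsin
          dsimp only
          rw [hps, Set.indicator_of_mem hθ2, hh,
            Set.indicator_of_mem (show ρ * Real.sin θ ∈ Set.Ioi (0:ℝ) from hr)]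
          simp only
          rw [hsq, mul_div_cancel_left₀ _ hρ.ne']
          rw [smul_eq_mul, mul_pow]
          ring
        · have hθ3 : θ ≤ 0 := by
            by_contra hcon
            push_neg at hcon
            exact hθ2 ⟨hcon, hθ.2⟩
          have hsin : Real.sin θ ≤ 0 :=
            Real.sin_nonpos_of_nonpos_of_neg_pi_le hθ3 hθ.1.le
          have hr : ¬ (ρ * Real.sin θ ∈ Set.Ioi (0:ℝ)) := by
            simp only [Set.mem_Ioi, not_lt]
            nlinarith
          dsimp only
          rw [hps, Set.indicator_of_notMem hθ2, hh, Set.indicator_of_notMem hr]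
          simp
    _ = A * ((∫ ρ in Set.Ioi (0:ℝ), ρ^(k+1) * kk ρ)
          * (∫ θ in Set.Ioo (-Real.pi) Real.pi, (Set.Ioo (0:ℝ) Real.pi).indicator
              (fun θ => g (Real.cos θ) * Real.sin θ ^ k) θ)) := by
        congr 1
        rw [show polarCoord.target = Set.Ioi (0:ℝ) ×ˢ Set.Ioo (-Real.pi) Real.pi from rfl]
        rw [Measure.volume_eq_prod, ← Measure.prod_restrict]
        exact integral_prod_mul (L := ℝ)
          (μ := volume.restrict (Set.Ioi (0:ℝ)))
          (ν := volume.restrict (Set.Ioo (-Real.pi) Real.pi))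
          (fun ρ => ρ^(k+1) * kk ρ)
          (fun θ => (Set.Ioo (0:ℝ) Real.pi).indicator (fun θ => g (Real.cos θ) * Real.sin θ ^ k) θ)
    _ = A * ((1/(k+2) : ℝ) * ∫ α in (0:ℝ)..Real.pi, g (Real.cos α) * Real.sin α ^ k) := by
        congr 2
        · have h1 : ∀ ρ : ℝ, ρ^(k+1) * kk ρ = (Set.Iio (1:ℝ)).indicator (fun ρ => ρ^(k+1)) ρ := by
            intro ρ
            by_cases h : ρ < 1
            · rw [kk_of_lt h, Set.indicator_of_mem (show ρ ∈ Set.Iio (1:ℝ) from h), mul_one]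
            · rw [kk_of_not_lt h, Set.indicator_of_notMem (show ρ ∉ Set.Iio (1:ℝ) from h), mul_zero]
          simp_rw [h1]
          rw [setIntegral_indicator measurableSet_Iio, Set.Ioi_inter_Iio,
            ← integral_Ioc_eq_integral_Ioo, ← intervalIntegral.integral_of_le zero_le_one,
            integral_pow]
          push_cast
          norm_num
          ring
        · rw [setIntegral_indicator measurableSet_Ioo,
            Set.inter_eq_self_of_subset_right (Set.Ioo_subset_Ioo (by linarith [Real.pi_pos]) le_rfl),
            ← integral_Ioc_eq_integral_Ioo,
            ← intervalIntegral.integral_of_le Real.pi_pos.le]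
end WayB
section FH

lemma FH_e1 (k : ℕ) (g : ℝ → ℝ) (hg : Continuous g) :
    (∫ ω : sphere (0 : EuclideanSpace ℝ (Fin (k+2))) 1,
        g ((ω : EuclideanSpace ℝ (Fin (k+2))) 0)
        ∂(volume : Measure (EuclideanSpace ℝ (Fin (k+2)))).toSphere)
      = (((k+1 : ℕ) : ℝ) * (volume (ball (0 : EuclideanSpace ℝ (Fin (k+1))) 1)).toReal)
        * ∫ α in (0:ℝ)..Real.pi, g (Real.cos α) * Real.sin α ^ k := by
  obtain ⟨C₀, hC₀⟩ := (isCompact_Icc (a := (-1:ℝ)) (b := 1)).exists_bound_of_continuousOn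
    hg.continuousOn
  have hC : ∀ s ∈ Set.Icc (-1:ℝ) 1, |g s| ≤ max C₀ 0 :=
    fun s hs => le_trans (hC₀ s hs) (le_max_left _ _)
  have h1 := wayA k g hg
  have h2 := wayB k g hg (le_max_right C₀ 0) hC
  rw [h1] at h2
  have h3 : (0:ℝ) < 1/(k+2) := by positivity
  calc (∫ ω : sphere (0 : EuclideanSpace ℝ (Fin (k+2))) 1,
        g ((ω : EuclideanSpace ℝ (Fin (k+2))) 0)
        ∂(volume : Measure (EuclideanSpace ℝ (Fin (k+2)))).toSphere)
      = (∫ ω : sphere (0 : EuclideanSpace ℝ (Fin (k+2))) 1,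
          g ((ω : EuclideanSpace ℝ (Fin (k+2))) 0)
          ∂(volume : Measure (EuclideanSpace ℝ (Fin (k+2)))).toSphere) * (1/(k+2) : ℝ) * (k+2 : ℝ) := by
        field_simp
    _ = _ := by
        rw [h2]
        field_simp

lemma sphereVol_eq (k : ℕ) :
    sphereVol k = ((k+1 : ℕ) : ℝ) * (volume (ball (0 : EuclideanSpace ℝ (Fin (k+1))) 1)).toReal := by
  have h1 : sphereMeasure (k+1) 1
      = Measure.map (fun y : sphere (0 : EuclideanSpace ℝ (Fin (k+1))) 1 =>
          (y : EuclideanSpace ℝ (Fin (k+1))))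
        (volume : Measure (EuclideanSpace ℝ (Fin (k+1)))).toSphere := by
    rw [sphereMeasure]
    simp [one_smul]
  rw [sphereVol, h1, Measure.map_apply measurable_subtype_coe MeasurableSet.univ,
    Set.preimage_univ, Measure.toSphere_apply_univ, finrank_euclideanSpace_fin,
    ENNReal.toReal_mul, ENNReal.toReal_natCast]

lemma FH (k : ℕ) (u : EuclideanSpace ℝ (Fin (k+2))) (hu : u ≠ 0) (g : ℝ → ℝ)
    (hg : Continuous g) :
    (∫ ω : sphere (0 : EuclideanSpace ℝ (Fin (k+2))) 1,
        g (inner ℝ u (ω : EuclideanSpace ℝ (Fin (k+2))) : ℝ)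
        ∂(volume : Measure (EuclideanSpace ℝ (Fin (k+2)))).toSphere)
      = sphereVol k * ∫ α in (0:ℝ)..Real.pi, g (‖u‖ * Real.cos α) * Real.sin α ^ k := by
  set uh : EuclideanSpace ℝ (Fin (k+2)) := ‖u‖⁻¹ • u with huh
  have hnu : ‖uh‖ = 1 := norm_smul_inv_norm hu
  set e0 : EuclideanSpace ℝ (Fin (k+2)) := EuclideanSpace.single (0 : Fin (k+2)) (1:ℝ) with he0
  have hne : ‖uh‖ = ‖e0‖ := by
    rw [hnu, he0, EuclideanSpace.norm_single]
    simp
  set R : EuclideanSpace ℝ (Fin (k+2)) ≃ₗᵢ[ℝ] EuclideanSpace ℝ (Fin (k+2)) :=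
    Submodule.reflection (ℝ ∙ (uh - e0))ᗮ with hR
  have hRu : R uh = e0 := Submodule.reflection_sub hne
  have key : ∀ ω : sphere (0 : EuclideanSpace ℝ (Fin (k+2))) 1,
      (inner ℝ u (ω : EuclideanSpace ℝ (Fin (k+2))) : ℝ)
        = ‖u‖ * ((sphRot R ω : sphere (0 : EuclideanSpace ℝ (Fin (k+2))) 1)
            : EuclideanSpace ℝ (Fin (k+2))) 0 := by
    intro ω
    have h1 : u = ‖u‖ • uh := by
      rw [huh, smul_smul]
      rw [mul_inv_cancel₀ (norm_ne_zero_iff.2 hu), one_smul]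
    calc (inner ℝ u (ω : EuclideanSpace ℝ (Fin (k+2))) : ℝ)
        = ‖u‖ * (inner ℝ uh (ω : EuclideanSpace ℝ (Fin (k+2))) : ℝ) := by
          conv_lhs => rw [h1]
          rw [real_inner_smul_left]
      _ = ‖u‖ * (inner ℝ (R uh) (R (ω : EuclideanSpace ℝ (Fin (k+2)))) : ℝ) := by
          rw [LinearIsometryEquiv.inner_map_map]
      _ = _ := by
          rw [hRu, he0, EuclideanSpace.inner_single_left]
          simp [sphRot_coe]
  calc (∫ ω : sphere (0 : EuclideanSpace ℝ (Fin (k+2))) 1,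
        g (inner ℝ u (ω : EuclideanSpace ℝ (Fin (k+2))) : ℝ)
        ∂(volume : Measure (EuclideanSpace ℝ (Fin (k+2)))).toSphere)
      = ∫ ω : sphere (0 : EuclideanSpace ℝ (Fin (k+2))) 1,
          (fun ω' : sphere (0 : EuclideanSpace ℝ (Fin (k+2))) 1 =>
            g (‖u‖ * ((ω' : EuclideanSpace ℝ (Fin (k+2))) 0))) (sphRot R ω)
          ∂(volume : Measure (EuclideanSpace ℝ (Fin (k+2)))).toSphere := by
        refine integral_congr_ae (Filter.Eventually.of_forall fun ω => ?_)
        dsimp only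
        rw [key ω]
    _ = ∫ ω : sphere (0 : EuclideanSpace ℝ (Fin (k+2))) 1,
          g (‖u‖ * ((ω : EuclideanSpace ℝ (Fin (k+2))) 0))
          ∂(volume : Measure (EuclideanSpace ℝ (Fin (k+2)))).toSphere := by
        exact integral_sphRot R
          (fun ω' : sphere (0 : EuclideanSpace ℝ (Fin (k+2))) 1 =>
            g (‖u‖ * ((ω' : EuclideanSpace ℝ (Fin (k+2))) 0)))
          (hg.comp (continuous_const.mul ((coord_cont 0).comp continuous_subtype_val)))
    _ = _ := by
        rw [FH_e1 k (fun s => g (‖u‖ * s)) (hg.comp (continuous_const.mul continuous_id)),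
          sphereVol_eq]

end FH

section Torus

lemma gamma_flip (q : ℕ) (t : ℝ) :
    ∫ α in (0:ℝ)..Real.pi, (-Real.cos α) * Real.exp (-(t * Real.cos α)) * Real.sin α ^ q
      = ∫ α in (0:ℝ)..Real.pi, Real.cos α * Real.exp (t * Real.cos α) * Real.sin α ^ q := by
  have h := intervalIntegral.integral_comp_sub_left (a := (0:ℝ)) (b := Real.pi)
    (fun α => Real.cos α * Real.exp (t * Real.cos α) * Real.sin α ^ q) Real.pi
  rw [sub_self, sub_zero] at h
  rw [← h]
  refine intervalIntegral.integral_congr fun α _ => ?_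
  rw [Real.cos_pi_sub, Real.sin_pi_sub]
  have harg : t * -Real.cos α = -(t * Real.cos α) := by ring
  rw [harg]

lemma torus1 (c : ℤ) :
    (∫ t in Set.Icc (0:ℝ) (2*Real.pi), Complex.exp (Complex.I * (((c : ℝ) * t : ℝ) : ℂ)))
      = if c = 0 then ((2*Real.pi : ℝ) : ℂ) else 0 := by
  rw [integral_Icc_eq_integral_Ioc,
    ← intervalIntegral.integral_of_le (by positivity : (0:ℝ) ≤ 2*Real.pi)]
  by_cases hc : c = 0
  · subst hc
    simp
  · have hc' : (Complex.I * ((c:ℝ) : ℂ)) ≠ 0 :=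
      mul_ne_zero Complex.I_ne_zero (Complex.ofReal_ne_zero.2 (Int.cast_ne_zero.2 hc))
    have harg : ∀ t : ℝ, Complex.I * (((c : ℝ) * t : ℝ) : ℂ) = (Complex.I * ((c:ℝ):ℂ)) * (t : ℂ) := by
      intro t
      push_cast
      ring
    rw [if_neg hc]
    simp_rw [harg]
    rw [integral_exp_mul_complex hc']
    have h2 : Complex.exp (Complex.I * ((c:ℝ):ℂ) * ((2*Real.pi : ℝ) : ℂ)) = 1 := by
      have h3 := Complex.exp_int_mul_two_pi_mul_I c
      rw [← h3]
      congr 1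
      push_cast
      ring
    rw [h2]
    simp

lemma torusInt (N : ℕ) (a : Fin N → ℤ) :
    (∫ x in {x : EuclideanSpace ℝ (Fin N) | ∀ i, x i ∈ Set.Icc 0 (2 * Real.pi)},
        Complex.exp (Complex.I * ((∑ i, (a i : ℝ) * x i : ℝ) : ℂ)))
      = ∏ i, (if a i = 0 then ((2*Real.pi : ℝ) : ℂ) else 0) := by
  have hset : {x : EuclideanSpace ℝ (Fin N) | ∀ i, x i ∈ Set.Icc 0 (2 * Real.pi)}
      = (MeasurableEquiv.toLp 2 (Fin N → ℝ)).symm ⁻¹' (Set.univ.pi fun _ => Set.Icc 0 (2 * Real.pi)) := by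
    ext x
    constructor
    · exact fun hx i _ => hx i
    · exact fun hx i => hx i (Set.mem_univ i)
  rw [hset]
  have hstep : (∫ x in (MeasurableEquiv.toLp 2 (Fin N → ℝ)).symm ⁻¹'
        (Set.univ.pi fun _ : Fin N => Set.Icc (0:ℝ) (2 * Real.pi)),
        Complex.exp (Complex.I * ((∑ i, (a i : ℝ) * x i : ℝ) : ℂ)))
      = ∫ v in Set.univ.pi fun _ : Fin N => Set.Icc (0:ℝ) (2 * Real.pi),
          Complex.exp (Complex.I * ((∑ i, (a i : ℝ) * v i : ℝ) : ℂ)) :=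
    (EuclideanSpace.volume_preserving_symm_measurableEquiv_toLp (Fin N)).setIntegral_preimage_emb
      (MeasurableEquiv.measurableEmbedding _)
      (fun v : Fin N → ℝ => Complex.exp (Complex.I * ((∑ i, (a i : ℝ) * v i : ℝ) : ℂ))) _
  rw [hstep]
  have hexp : ∀ v : Fin N → ℝ,
      Complex.exp (Complex.I * ((∑ i, (a i : ℝ) * v i : ℝ) : ℂ))
      = ∏ i, Complex.exp (Complex.I * (((a i : ℝ) * v i : ℝ) : ℂ)) := by
    intro v
    rw [← Complex.exp_sum]
    congr 1
    push_cast
    rw [Finset.mul_sum]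
  have hind : ∀ v : Fin N → ℝ,
      (Set.univ.pi fun _ : Fin N => Set.Icc (0:ℝ) (2 * Real.pi)).indicator
        (fun v => ∏ i, Complex.exp (Complex.I * (((a i : ℝ) * v i : ℝ) : ℂ))) v
      = ∏ i, (Set.Icc (0:ℝ) (2 * Real.pi)).indicator
          (fun t => Complex.exp (Complex.I * (((a i : ℝ) * t : ℝ) : ℂ))) (v i) := by
    intro v
    by_cases hv : v ∈ Set.univ.pi fun _ : Fin N => Set.Icc (0:ℝ) (2 * Real.pi)
    · rw [Set.indicator_of_mem hv]
      refine Finset.prod_congr rfl fun i _ => ?_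
      rw [Set.indicator_of_mem (hv i (Set.mem_univ i))]
    · rw [Set.indicator_of_notMem hv]
      rw [Set.mem_pi] at hv
      push_neg at hv
      obtain ⟨i, _, hvi⟩ := hv
      exact (Finset.prod_eq_zero (Finset.mem_univ i) (Set.indicator_of_notMem hvi _)).symm
  calc (∫ v in Set.univ.pi fun _ : Fin N => Set.Icc (0:ℝ) (2 * Real.pi),
          Complex.exp (Complex.I * ((∑ i, (a i : ℝ) * v i : ℝ) : ℂ)))
      = ∫ v : Fin N → ℝ, ∏ i, (Set.Icc (0:ℝ) (2 * Real.pi)).indicator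
          (fun t => Complex.exp (Complex.I * (((a i : ℝ) * t : ℝ) : ℂ))) (v i) := by
        rw [← integral_indicator (MeasurableSet.univ_pi fun _ => measurableSet_Icc)]
        simp_rw [hexp]
        simp_rw [hind]
    _ = ∏ i, ∫ t : ℝ, (Set.Icc (0:ℝ) (2 * Real.pi)).indicator
          (fun t => Complex.exp (Complex.I * (((a i : ℝ) * t : ℝ) : ℂ))) t :=
        MeasureTheory.integral_fintype_prod_eq_prod (ι := Fin N) _
    _ = ∏ i, (if a i = 0 then ((2*Real.pi : ℝ) : ℂ) else 0) := by
        refine Finset.prod_congr rfl fun i _ => ?_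
        rw [integral_indicator measurableSet_Icc]
        exact torus1 (a i)

end Torus

section Sphere

lemma sphereInt (k : ℕ) (ε : ℝ) (hε : 0 < ε) (u : EuclideanSpace ℝ (Fin (k+2))) :
    (∫ y, (-(inner ℝ u y : ℝ)) * Real.exp (-(2 * (inner ℝ u y : ℝ))) ∂(sphereMeasure (k+2) ε))
      = ε^(k+2) * ‖u‖
        * (∫ α in (0:ℝ)..Real.pi,
            Real.cos α * Real.exp ((2*ε*‖u‖) * Real.cos α) * Real.sin α ^ k)
        * sphereVol k := by
  have hcont : Continuous (fun y : EuclideanSpace ℝ (Fin (k+2)) =>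
      (-(inner ℝ u y : ℝ)) * Real.exp (-(2 * (inner ℝ u y : ℝ)))) := by
    have hi : Continuous (fun y : EuclideanSpace ℝ (Fin (k+2)) => (inner ℝ u y : ℝ)) :=
      continuous_const.inner continuous_id
    exact (hi.neg).mul ((((continuous_const.mul hi)).neg).rexp)
  have hφ : Continuous (fun ω : sphere (0 : EuclideanSpace ℝ (Fin (k+2))) 1 =>
      ε • (ω : EuclideanSpace ℝ (Fin (k+2)))) :=
    Continuous.const_smul continuous_subtype_val ε
  rw [sphereMeasure, integral_smul_measure,
    ENNReal.toReal_ofReal (by positivity : (0:ℝ) ≤ ε ^ (k+2-1)),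
    integral_map hφ.measurable.aemeasurable hcont.aestronglyMeasurable]
  rcases eq_or_ne u 0 with rfl | hu
  · simp
  · set g : ℝ → ℝ := fun s => (-(ε * s)) * Real.exp (-(2 * (ε * s))) with hg
    have hgc : Continuous g := by
      rw [hg]
      exact ((continuous_const.mul continuous_id).neg).mul
        (((continuous_const.mul (continuous_const.mul continuous_id)).neg).rexp)
    have hre : (fun ω : sphere (0 : EuclideanSpace ℝ (Fin (k+2))) 1 =>
        (-(inner ℝ u (ε • (ω : EuclideanSpace ℝ (Fin (k+2)))) : ℝ))
          * Real.exp (-(2 * (inner ℝ u (ε • (ω : EuclideanSpace ℝ (Fin (k+2)))) : ℝ))))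
        = fun ω : sphere (0 : EuclideanSpace ℝ (Fin (k+2))) 1 =>
            g ((inner ℝ u (ω : EuclideanSpace ℝ (Fin (k+2))) : ℝ)) := by
      funext ω
      rw [hg]
      simp only [real_inner_smul_right]
    rw [hre, FH k u hu g hgc]
    have hint : (∫ α in (0:ℝ)..Real.pi, g (‖u‖ * Real.cos α) * Real.sin α ^ k)
        = (ε * ‖u‖) * ∫ α in (0:ℝ)..Real.pi,
            (-Real.cos α) * Real.exp (-((2*ε*‖u‖) * Real.cos α)) * Real.sin α ^ k := by
      rw [← intervalIntegral.integral_const_mul]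
      refine intervalIntegral.integral_congr fun α _ => ?_
      rw [hg]
      have harg : -(2 * (ε * (‖u‖ * Real.cos α))) = -((2*ε*‖u‖) * Real.cos α) := by ring
      simp only
      rw [harg]
      ring
    rw [hint, gamma_flip]
    have hpow : ε ^ (k+2-1) = ε ^ (k+1) := by norm_num
    rw [hpow, smul_eq_mul]
    ring

end Sphere
/-- Let `n ≥ 2`, `ε > 0` and `m, m' ∈ ℤⁿ`.  Then
`∫_{[0,2π]^n} ∫_{S^{n-1}_ε} (−⟨m', y⟩) e^{i⟨m−m', x⟩} e^{−⟨m+m', y⟩} dσ_ε(y) dx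
  = (2π)^n ε^n |m| γ_n'(2ε|m|) vol(S^{n-2})` if `m = m'`, and `= 0` otherwise. -/
theorem integral_torus_sphere_inner_exp (n : ℕ) (hn : 2 ≤ n) (ε : ℝ) (hε : 0 < ε)
    (m m' : Fin n → ℤ) :
    (∫ x in {x : EuclideanSpace ℝ (Fin n) | ∀ i, x i ∈ Set.Icc 0 (2 * Real.pi)},
      ∫ y, ((-(inner ℝ (intVec m') y : ℝ) : ℝ) : ℂ) *
          Complex.exp (Complex.I * ((inner ℝ (intVec m - intVec m') x : ℝ) : ℂ)) *
          Complex.exp (-(((inner ℝ (intVec m + intVec m') y : ℝ) : ℂ)))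
        ∂(sphereMeasure n ε)) =
      if m = m' then
        (((2 * Real.pi) ^ n * ε ^ n * ‖intVec m‖ * gammaN' n (2 * ε * ‖intVec m‖) *
          sphereVol (n - 2) : ℝ) : ℂ)
      else 0 := by
  obtain ⟨k, rfl⟩ : ∃ k, n = k + 2 := ⟨n - 2, by omega⟩
  set Sc : ℂ := ∫ y, ((-(inner ℝ (intVec m') y : ℝ) : ℝ) : ℂ) *
      Complex.exp (-(((inner ℝ (intVec m + intVec m') y : ℝ) : ℂ))) ∂(sphereMeasure (k+2) ε)
    with hSc
  have hpull : ∀ x : EuclideanSpace ℝ (Fin (k+2)),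
      (∫ y, ((-(inner ℝ (intVec m') y : ℝ) : ℝ) : ℂ) *
          Complex.exp (Complex.I * ((inner ℝ (intVec m - intVec m') x : ℝ) : ℂ)) *
          Complex.exp (-(((inner ℝ (intVec m + intVec m') y : ℝ) : ℂ)))
        ∂(sphereMeasure (k+2) ε))
      = Complex.exp (Complex.I * ((inner ℝ (intVec m - intVec m') x : ℝ) : ℂ)) * Sc := by
    intro x
    rw [hSc, ← integral_const_mul]
    refine integral_congr_ae (Filter.Eventually.of_forall fun y => ?_)
    ring
  simp_rw [hpull]
  rw [integral_mul_const]
  have hips : ∀ x : EuclideanSpace ℝ (Fin (k+2)),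
      (inner ℝ (intVec m - intVec m') x : ℝ) = ∑ i, ((m i - m' i : ℤ) : ℝ) * x i := by
    intro x
    simp only [PiLp.inner_apply, RCLike.inner_apply, conj_trivial]
    refine Finset.sum_congr rfl fun i _ => ?_
    rw [mul_comm]
    congr 1
    show (intVec m - intVec m') i = _
    simp [intVec]
  simp_rw [hips]
  rw [torusInt (k+2) (fun i => m i - m' i)]
  by_cases h : m = m'
  · subst h
    rw [if_pos rfl]
    have hprod : (∏ i : Fin (k+2), if m i - m i = 0 then ((2*Real.pi : ℝ) : ℂ) else 0)
        = ((2*Real.pi : ℝ) : ℂ)^(k+2) := by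
      simp
    rw [hprod]
    have h1 : ∀ y : EuclideanSpace ℝ (Fin (k+2)),
        ((-(inner ℝ (intVec m) y : ℝ) : ℝ) : ℂ) *
          Complex.exp (-(((inner ℝ (intVec m + intVec m) y : ℝ) : ℂ)))
        = (((-(inner ℝ (intVec m) y : ℝ)) * Real.exp (-(2 * (inner ℝ (intVec m) y : ℝ))) : ℝ) : ℂ) := by
      intro y
      have h2 : (inner ℝ (intVec m + intVec m) y : ℝ) = 2 * (inner ℝ (intVec m) y : ℝ) := by
        rw [inner_add_left]
        ring
      rw [h2, ← Complex.ofReal_neg, ← Complex.ofReal_exp, ← Complex.ofReal_mul]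
    have hSc2 : Sc = ((ε^(k+2) * ‖intVec m‖
        * (∫ α in (0:ℝ)..Real.pi,
            Real.cos α * Real.exp ((2*ε*‖intVec m‖) * Real.cos α) * Real.sin α ^ k)
        * sphereVol k : ℝ) : ℂ) := by
      rw [hSc]
      simp_rw [h1]
      rw [← sphereInt k ε hε (intVec m)]
      exact integral_ofReal
    rw [hSc2]
    have hg : gammaN' (k+2) (2 * ε * ‖intVec m‖)
        = ∫ α in (0:ℝ)..Real.pi,
            Real.cos α * Real.exp ((2*ε*‖intVec m‖) * Real.cos α) * Real.sin α ^ k := by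
      rw [gammaN']
      norm_num
    have hk2 : (k+2) - 2 = k := by omega
    rw [hk2, hg]
    push_cast
    ring
  · rw [if_neg h]
    have hex : ∃ i, m i ≠ m' i := by
      by_contra hc
      push_neg at hc
      exact h (funext hc)
    obtain ⟨i, hi⟩ := hex
    rw [Finset.prod_eq_zero (Finset.mem_univ i) ((if_neg (sub_ne_zero_of_ne hi)) : (if m i - m' i = 0 then ((2*Real.pi : ℝ) : ℂ) else 0) = 0), zero_mul]
end FH1
end
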